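/- Suppose each structural function is linear, i.e., f_i(x) = Σ_{k<i} a_{ik} x_k, and p(x) = ∏_{i=1}^d Gaussian density of x_i − f_i(x) with variance σ_i². Then for every j = 1,…,d, the diagonal entry of the score's Jacobian ∂s_j/∂x_j (x) = −1/σ_j² − Σ_{i>j} a_{ij}²/σ_i² is constant in x. -/

import Mathlib

open Real Finset

/-- Score component j of the linear additive Gaussian model in topological order:
`s_j(x) = -(x_j - f_j(x))/σ_j² + Σ_{i>j} a_{ij} (x_i - f_i(x))/σ_i²`
where `f_i(x) = Σ_{k<i} a_{ik} x_k`. -/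
noncomputable def linScore (d : ℕ) (a : Fin d → Fin d → ℝ) (σ : Fin d → ℝ)
    (j : Fin d) (x : Fin d → ℝ) : ℝ :=
  -(x j - ∑ k ∈ Finset.univ.filter (fun k : Fin d => k < j), a j k * x k) / (σ j) ^ 2 +
    ∑ i ∈ Finset.univ.filter (fun i : Fin d => j < i),
      a i j * (x i - ∑ k ∈ Finset.univ.filter (fun k : Fin d => k < i), a i k * x k) / (σ i) ^ 2

theorem linear_model_constant_diagonal
    (d : ℕ) (a : Fin d → Fin d → ℝ) (σ : Fin d → ℝ) (hσ : ∀ i, 0 < σ i) :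
    ∀ (j : Fin d) (x : Fin d → ℝ),
      HasDerivAt (fun t : ℝ => linScore d a σ j (Function.update x j t))
        (-1 / (σ j) ^ 2 -
          ∑ i ∈ Finset.univ.filter (fun i : Fin d => j < i), (a i j) ^ 2 / (σ i) ^ 2)
        (x j) := by
  intro j x
  set C : ℝ := ∑ k ∈ Finset.univ.filter (fun k : Fin d => k < j), a j k * x k with hC
  have hsimp : ∀ t : ℝ, linScore d a σ j (Function.update x j t)
      = -(t - C) / (σ j) ^ 2
        + ∑ i ∈ Finset.univ.filter (fun i : Fin d => j < i),
            a i j * (x i - (a i j * t +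
              ∑ k ∈ (Finset.univ.filter (fun k : Fin d => k < i)).erase j, a i k * x k))
              / (σ i) ^ 2 := by
    intro t
    unfold linScore
    congr 1
    · have hs : (∑ k ∈ Finset.univ.filter (fun k : Fin d => k < j),
          a j k * Function.update x j t k) = C := by
        rw [hC]
        refine Finset.sum_congr rfl fun k hk => ?_
        have hkj : k ≠ j := ne_of_lt (Finset.mem_filter.mp hk).2
        rw [Function.update_of_ne hkj]
      rw [Function.update_self, hs]
    · refine Finset.sum_congr rfl fun i hi => ?_
      have hji : j < i := (Finset.mem_filter.mp hi).2
      have hjmem : j ∈ Finset.univ.filter (fun k : Fin d => k < i) := by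
        simp [hji]
      have hxi : Function.update x j t i = x i :=
        Function.update_of_ne (ne_of_gt hji) t x
      have hs : (∑ k ∈ Finset.univ.filter (fun k : Fin d => k < i),
          a i k * Function.update x j t k)
          = a i j * t + ∑ k ∈ (Finset.univ.filter (fun k : Fin d => k < i)).erase j,
              a i k * x k := by
        rw [← Finset.add_sum_erase _ _ hjmem, Function.update_self]
        congr 1
        refine Finset.sum_congr rfl fun k hk => ?_
        have hkj : k ≠ j := (Finset.mem_erase.mp hk).1
        rw [Function.update_of_ne hkj]
      rw [hxi, hs]
  rw [funext hsimp]
  have h1 : HasDerivAt (fun t : ℝ => -(t - C) / (σ j) ^ 2) (-1 / (σ j) ^ 2) (x j) :=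
    (((hasDerivAt_id (x j)).sub_const C).neg).div_const _
  have h2 : HasDerivAt (fun t : ℝ =>
      ∑ i ∈ Finset.univ.filter (fun i : Fin d => j < i),
        a i j * (x i - (a i j * t +
          ∑ k ∈ (Finset.univ.filter (fun k : Fin d => k < i)).erase j, a i k * x k))
          / (σ i) ^ 2)
      (∑ i ∈ Finset.univ.filter (fun i : Fin d => j < i),
        a i j * (-(a i j)) / (σ i) ^ 2) (x j) := by
    refine HasDerivAt.fun_sum fun i _ => ?_
    simpa using (((((hasDerivAt_id (x j)).const_mul (a i j)).add_const _).const_sub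
      (x i)).const_mul (a i j)).div_const ((σ i) ^ 2)
  refine (h1.add h2).congr_deriv ?_
  rw [sub_eq_add_neg, ← Finset.sum_neg_distrib]
  congr 1
  exact Finset.sum_congr rfl fun i _ => by ring
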